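/- Let v₁, v₂ be unit vectors in R^n with v₁^T v₂ = cos θ for some θ ∈ (0, π], and let ψ₁, ψ₂ ∈ [0, π/2] with ψ₁ + ψ₂ < θ. Then for any c ∈ R^n and any positive definite E ∈ R^{n×n}, the closed interiors of the cones C(c, E⁻¹v₁, ψ₁, E) and C(c, E⁻¹v₂, ψ₂, E) intersect exactly in the vertex {c}. -/

import Mathlib

open Matrix

/-- Euclidean norm of a vector, `‖v‖ = √(v ⬝ᵥ v)`. -/
noncomputable def enorm {n : ℕ} (v : Fin n → ℝ) : ℝ := Real.sqrt (v ⬝ᵥ v)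

/-- Closed interior of the cone with vertex `c`, axis `v`, half-aperture `θ`:
`C_≤(c,v,θ,E) = {x : cos θ ‖Ev‖ ‖E(x-c)‖ ≤ vᵀE²(x-c)}`. -/
noncomputable def coneLe {n : ℕ} (c v : Fin n → ℝ) (θ : ℝ) (E : Matrix (Fin n) (Fin n) ℝ) :
    Set (Fin n → ℝ) :=
  {x | Real.cos θ * _root_.enorm (E *ᵥ v) * _root_.enorm (E *ᵥ (x - c)) ≤ v ⬝ᵥ ((E * E) *ᵥ (x - c))}

/-- Cauchy–Schwarz for the dot product. -/
lemma dot_cs {n : ℕ} (a b : Fin n → ℝ) : (a ⬝ᵥ b) ^ 2 ≤ (a ⬝ᵥ a) * (b ⬝ᵥ b) := by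
  simpa [dotProduct, sq] using Finset.sum_mul_sq_le_sq_mul_sq Finset.univ a b

lemma dot_self_nonneg {n : ℕ} (a : Fin n → ℝ) : 0 ≤ a ⬝ᵥ a :=
  Finset.sum_nonneg fun i _ => mul_self_nonneg (a i)

lemma dot_mulVec_left {n : ℕ} (M : Matrix (Fin n) (Fin n) ℝ) (a b : Fin n → ℝ) :
    a ⬝ᵥ (M *ᵥ b) = (Mᵀ *ᵥ a) ⬝ᵥ b := by
  rw [Matrix.dotProduct_mulVec, ← Matrix.mulVec_transpose]

set_option maxHeartbeats 1000000 in
/-- Lemma 1: two cones with axes `E⁻¹v₁`, `E⁻¹v₂` separated by angle `θ` and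
half-apertures `ψ₁ + ψ₂ < θ` intersect only at the common vertex. -/
theorem cones_intersect_in_vertex {n : ℕ} (v₁ v₂ : Fin n → ℝ)
    (hv₁ : v₁ ⬝ᵥ v₁ = 1) (hv₂ : v₂ ⬝ᵥ v₂ = 1) (θ : ℝ) (hθ₀ : 0 < θ) (hθπ : θ ≤ Real.pi)
    (hangle : v₁ ⬝ᵥ v₂ = Real.cos θ) (ψ₁ ψ₂ : ℝ) (hψ₁₀ : 0 ≤ ψ₁) (hψ₁ : ψ₁ ≤ Real.pi / 2)
    (hψ₂₀ : 0 ≤ ψ₂) (hψ₂ : ψ₂ ≤ Real.pi / 2) (hsum : ψ₁ + ψ₂ < θ)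
    (c : Fin n → ℝ) (E : Matrix (Fin n) (Fin n) ℝ) (hE : E.PosDef) :
    coneLe c (E⁻¹ *ᵥ v₁) ψ₁ E ∩ coneLe c (E⁻¹ *ᵥ v₂) ψ₂ E = {c} := by
  have hEu : IsUnit E.det := isUnit_iff_ne_zero.mpr hE.det_pos.ne'
  have hEinv : E * E⁻¹ = 1 := Matrix.mul_nonsing_inv E hEu
  have hEinv' : E⁻¹ * E = 1 := Matrix.nonsing_inv_mul E hEu
  have hsymm : Eᵀ = E := (by simpa using hE.1 : E.IsSymm).eq
  have haxis : ∀ v : Fin n → ℝ, E *ᵥ (E⁻¹ *ᵥ v) = v := by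
    intro v; rw [Matrix.mulVec_mulVec, hEinv, Matrix.one_mulVec]
  have hdot : ∀ (v z : Fin n → ℝ), (E⁻¹ *ᵥ v) ⬝ᵥ ((E * E) *ᵥ z) = v ⬝ᵥ (E *ᵥ z) := by
    intro v z
    have hEE : E * E * E⁻¹ = E := by rw [mul_assoc, hEinv, mul_one]
    rw [dot_mulVec_left, Matrix.transpose_mul, hsymm, Matrix.mulVec_mulVec, hEE,
      dot_mulVec_left E v z, hsymm]
  ext x
  simp only [Set.mem_inter_iff, Set.mem_singleton_iff, coneLe, Set.mem_setOf_eq,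
    haxis, hdot]
  constructor
  · rintro ⟨h₁, h₂⟩
    by_contra hxc
    have hzne : x - c ≠ 0 := sub_ne_zero.mpr hxc
    rw [show _root_.enorm (E *ᵥ (x - c)) = Real.sqrt ((E *ᵥ (x - c)) ⬝ᵥ (E *ᵥ (x - c))) from rfl,
      show _root_.enorm v₁ = 1 by rw [_root_.enorm, hv₁, Real.sqrt_one]] at h₁
    rw [show _root_.enorm (E *ᵥ (x - c)) = Real.sqrt ((E *ᵥ (x - c)) ⬝ᵥ (E *ᵥ (x - c))) from rfl,
      show _root_.enorm v₂ = 1 by rw [_root_.enorm, hv₂, Real.sqrt_one]] at h₂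
    generalize hygen : E *ᵥ (x - c) = y at h₁ h₂
    have hyne : y ≠ 0 := by
      intro h0
      apply hzne
      have : E⁻¹ *ᵥ (E *ᵥ (x - c)) = E⁻¹ *ᵥ 0 := by rw [hygen, h0]
      rwa [Matrix.mulVec_mulVec, hEinv', Matrix.one_mulVec, Matrix.mulVec_zero] at this
    have hyy : 0 < y ⬝ᵥ y :=
      lt_of_le_of_ne (dot_self_nonneg y) fun h =>
        hyne (dotProduct_self_eq_zero.mp h.symm)
    obtain ⟨N, hN⟩ : ∃ N, N = Real.sqrt (y ⬝ᵥ y) := ⟨_, rfl⟩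
    have hNpos : 0 < N := hN ▸ Real.sqrt_pos.mpr hyy
    have hN2 : N ^ 2 = y ⬝ᵥ y := hN ▸ Real.sq_sqrt hyy.le
    rw [← hN, mul_one] at h₁ h₂
    have hcψ₁ : 0 ≤ Real.cos ψ₁ := Real.cos_nonneg_of_mem_Icc ⟨by linarith [Real.pi_pos], hψ₁⟩
    have hcψ₂ : 0 ≤ Real.cos ψ₂ := Real.cos_nonneg_of_mem_Icc ⟨by linarith [Real.pi_pos], hψ₂⟩
    have hsψ₁ : 0 ≤ Real.sin ψ₁ :=
      Real.sin_nonneg_of_nonneg_of_le_pi hψ₁₀ (by linarith [Real.pi_pos])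
    have hsψ₂ : 0 ≤ Real.sin ψ₂ :=
      Real.sin_nonneg_of_nonneg_of_le_pi hψ₂₀ (by linarith [Real.pi_pos])
    obtain ⟨t₁, ht₁⟩ : ∃ t, t = (v₁ ⬝ᵥ y) / N := ⟨_, rfl⟩
    obtain ⟨t₂, ht₂⟩ : ∃ t, t = (v₂ ⬝ᵥ y) / N := ⟨_, rfl⟩
    have hv1y : v₁ ⬝ᵥ y = t₁ * N := by rw [ht₁]; field_simp
    have hv2y : v₂ ⬝ᵥ y = t₂ * N := by rw [ht₂]; field_simp
    have ht₁ge : Real.cos ψ₁ ≤ t₁ := by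
      rw [ht₁, le_div_iff₀ hNpos]; exact h₁
    have ht₂ge : Real.cos ψ₂ ≤ t₂ := by
      rw [ht₂, le_div_iff₀ hNpos]; exact h₂
    have ht₁le : t₁ ≤ 1 := by
      have := dot_cs v₁ y
      rw [hv₁, one_mul, ← hN2, hv1y] at this
      have hsq : t₁ ^ 2 ≤ 1 := by nlinarith only [this, mul_pos hNpos hNpos]
      nlinarith only [hsq]
    have ht₂le : t₂ ≤ 1 := by
      have := dot_cs v₂ y
      rw [hv₂, one_mul, ← hN2, hv2y] at this
      have hsq : t₂ ^ 2 ≤ 1 := by nlinarith only [this, mul_pos hNpos hNpos]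
      nlinarith only [hsq]
    -- orthogonal components
    have hexp : ∀ (a b : Fin n → ℝ) (s r : ℝ),
        (a - s • y) ⬝ᵥ (b - r • y) = a ⬝ᵥ b - s * (y ⬝ᵥ b) - r * (a ⬝ᵥ y) + s * r * (y ⬝ᵥ y) := by
      intro a b s r
      simp only [sub_dotProduct, dotProduct_sub, smul_dotProduct,
        dotProduct_smul, smul_eq_mul]
      ring
    have hyv1 : y ⬝ᵥ v₁ = t₁ * N := by rw [dotProduct_comm]; exact hv1y
    have hyv2 : y ⬝ᵥ v₂ = t₂ * N := by rw [dotProduct_comm]; exact hv2y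
    have hwd : (v₁ - (t₁ / N) • y) ⬝ᵥ (v₂ - (t₂ / N) • y) = Real.cos θ - t₁ * t₂ := by
      rw [hexp, hangle, hyv2, hv1y, ← hN2]
      field_simp
      ring
    have hw₁self : (v₁ - (t₁ / N) • y) ⬝ᵥ (v₁ - (t₁ / N) • y) = 1 - t₁ ^ 2 := by
      rw [hexp, hv₁, hyv1, hv1y, ← hN2]
      field_simp
      ring
    have hw₂self : (v₂ - (t₂ / N) • y) ⬝ᵥ (v₂ - (t₂ / N) • y) = 1 - t₂ ^ 2 := by
      rw [hexp, hv₂, hyv2, hv2y, ← hN2]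
      field_simp
      ring
    have hcs : (Real.cos θ - t₁ * t₂) ^ 2 ≤ (1 - t₁ ^ 2) * (1 - t₂ ^ 2) := by
      have := dot_cs (v₁ - (t₁ / N) • y) (v₂ - (t₂ / N) • y)
      rwa [hwd, hw₁self, hw₂self] at this
    have h1t₁ : 0 ≤ 1 - t₁ ^ 2 := by nlinarith only [ht₁le, ht₁ge, hcψ₁]
    have h1t₂ : 0 ≤ 1 - t₂ ^ 2 := by nlinarith only [ht₂le, ht₂ge, hcψ₂]
    have hb₁ : 1 - t₁ ^ 2 ≤ Real.sin ψ₁ ^ 2 := by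
      have := Real.sin_sq_add_cos_sq ψ₁; nlinarith only [this, ht₁ge, hcψ₁]
    have hb₂ : 1 - t₂ ^ 2 ≤ Real.sin ψ₂ ^ 2 := by
      have := Real.sin_sq_add_cos_sq ψ₂; nlinarith only [this, ht₂ge, hcψ₂]
    have hC : Real.cos ψ₁ * Real.cos ψ₂ ≤ t₁ * t₂ :=
      mul_le_mul ht₁ge ht₂ge hcψ₂ (hcψ₁.trans ht₁ge)
    have hS : 0 ≤ Real.sin ψ₁ * Real.sin ψ₂ := mul_nonneg hsψ₁ hsψ₂
    have hPS : (Real.cos θ - t₁ * t₂) ^ 2 ≤ (Real.sin ψ₁ * Real.sin ψ₂) ^ 2 := by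
      calc (Real.cos θ - t₁ * t₂) ^ 2 ≤ (1 - t₁ ^ 2) * (1 - t₂ ^ 2) := hcs
        _ ≤ Real.sin ψ₁ ^ 2 * Real.sin ψ₂ ^ 2 :=
            mul_le_mul hb₁ hb₂ h1t₂ (sq_nonneg (Real.sin ψ₁))
        _ = (Real.sin ψ₁ * Real.sin ψ₂) ^ 2 := by ring
    have hP : -(Real.sin ψ₁ * Real.sin ψ₂) ≤ Real.cos θ - t₁ * t₂ := by
      nlinarith only [hPS, hS, sq_nonneg (Real.cos θ - t₁ * t₂ + Real.sin ψ₁ * Real.sin ψ₂)]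
    have hkey : Real.cos (ψ₁ + ψ₂) ≤ Real.cos θ := by
      rw [Real.cos_add]
      linarith
    have : Real.cos θ < Real.cos (ψ₁ + ψ₂) :=
      Real.cos_lt_cos_of_nonneg_of_le_pi (by linarith) hθπ hsum
    linarith
  · rintro rfl
    constructor <;> simp [_root_.enorm, Matrix.mulVec_zero]
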